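/- If G is a (P₃ ∪ P₂, diamond)-free graph with clique number ω ≥ 5, then G is perfect; in particular χ(G) = ω(G). -/

import Mathlib

open SimpleGraph

/-- `H` occurs as an induced subgraph of `G`. -/
def IsInducedCopy {α β : Type*} (H : SimpleGraph α) (G : SimpleGraph β) : Prop :=
  ∃ f : α ↪ β, ∀ a b : α, G.Adj (f a) (f b) ↔ H.Adj a b

/-- `G` is `H`-free: no induced copy of `H`. -/
def Free {α β : Type*} (G : SimpleGraph α) (H : SimpleGraph β) : Prop :=
  ¬ IsInducedCopy H G

/-- `P₃ ∪ P₂`: disjoint union of a path on 3 vertices and an edge. -/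
def P3UP2 : SimpleGraph (Fin 5) :=
  SimpleGraph.fromRel (fun a b => (a, b) ∈ [((0 : Fin 5), (1 : Fin 5)), (1, 2), (3, 4)])

/-- The diamond: `K₄` minus an edge. -/
def diamondG : SimpleGraph (Fin 4) :=
  SimpleGraph.fromRel (fun a b =>
    (a, b) ∈ [((0 : Fin 4), (2 : Fin 4)), (0, 3), (1, 2), (1, 3), (2, 3)])

/-- `2K₂`: two disjoint edges. -/
def twoK2 : SimpleGraph (Fin 4) :=
  SimpleGraph.fromRel (fun a b => (a, b) ∈ [((0 : Fin 4), (1 : Fin 4)), (2, 3)])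

/-- `P₄ ∪ P₂`. -/
def P4UP2 : SimpleGraph (Fin 6) :=
  SimpleGraph.fromRel (fun a b =>
    (a, b) ∈ [((0 : Fin 6), (1 : Fin 6)), (1, 2), (2, 3), (4, 5)])

/-- The cycle on `n` vertices (for `n ≥ 3`), as a graph on `ZMod n`. -/
def cycG (n : ℕ) : SimpleGraph (ZMod n) :=
  SimpleGraph.fromRel (fun a b => b = a + 1)

/-- A graph is perfect if every induced subgraph has chromatic number
equal to its clique number. -/
def IsPerfect {V : Type*} (G : SimpleGraph V) : Prop :=
  ∀ s : Set V, (G.induce s).chromaticNumber = ((G.induce s).cliqueNum : ℕ∞)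

/-- The set `C_{ij}` attached to a maximum clique enumerated by `f : Fin ω ↪ V`:
vertices outside the clique, non-adjacent to both `f i` and `f j`, where `(i,j)`
is the lexicographically least such pair (this closed form is equivalent to the
iterative definition removing earlier `C`-sets). -/
def Cset {V : Type*} (G : SimpleGraph V) {ω : ℕ} (f : Fin ω ↪ V) (i j : Fin ω) : Set V :=
  {v | v ∉ Set.range f ∧ ¬ G.Adj v (f i) ∧ ¬ G.Adj v (f j) ∧
    ∀ p q : Fin ω, p < q → ¬ G.Adj v (f p) → ¬ G.Adj v (f q) →
      i < p ∨ (i = p ∧ j ≤ q)}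

/-- The set `I_a` attached to a maximum clique enumerated by `f : Fin ω ↪ V`:
vertices outside the clique adjacent to every clique vertex except `f k`. -/
def Iset {V : Type*} (G : SimpleGraph V) {ω : ℕ} (f : Fin ω ↪ V) (k : Fin ω) : Set V :=
  {v | v ∉ Set.range f ∧ ¬ G.Adj v (f k) ∧ ∀ l : Fin ω, l ≠ k → G.Adj v (f l)}


open Finset in
lemma auxColor {W : Type*} [Fintype W] (H : SimpleGraph W) (A : Finset W)
    (hA : H.IsClique ↑A)
    (h1 : ∀ v ∉ A, ∀ a ∈ A, ∀ b ∈ A, H.Adj v a → H.Adj v b → a = b)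
    (h2 : ∀ u w z : W, u ∉ A → w ∉ A → z ∉ A → u ≠ z → H.Adj u w → H.Adj w z → H.Adj u z) :
    H.chromaticNumber = (H.cliqueNum : ℕ∞) := by
  classical
  set m := H.cliqueNum with hm
  obtain ⟨Kc, hKc⟩ := H.exists_isNClique_cliqueNum
  have hub : (m : ℕ∞) ≤ H.chromaticNumber := by
    simpa [hKc.2] using hKc.1.card_le_chromaticNumber
  rcases Nat.eq_zero_or_pos m with hm0 | hmpos
  · have : IsEmpty W := by
      by_contra h
      rw [not_isEmpty_iff] at h
      obtain ⟨v⟩ := h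
      have h1 : ({v} : Finset W).card ≤ m :=
        IsClique.card_le_cliqueNum (tc := by rw [Finset.coe_singleton]; exact H.isClique_singleton v)
      simp [hm0] at h1
    rw [H.chromaticNumber_eq_zero_of_isEmpty, hm0]
    simp
  · -- construct a coloring with m colors
    have hAcard : A.card ≤ m := hA.card_le_cliqueNum
    obtain ⟨colA, hcolA⟩ : ∃ f : W → Fin m, Set.InjOn f ↑A := by
      refine ⟨fun v => if h : v ∈ A then Fin.castLE hAcard (A.equivFin ⟨v, h⟩) else ⟨0, hmpos⟩, ?_⟩
      intro x hx y hy hxy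
      rw [Finset.mem_coe] at hx hy
      simp only [dif_pos hx, dif_pos hy] at hxy
      have := A.equivFin.injective (Fin.castLE_injective hAcard hxy)
      simpa [Subtype.ext_iff] using this
    -- classes
    set Cl : W → Finset W := fun u => univ.filter fun w => w ∉ A ∧ (w = u ∨ H.Adj w u) with hCl
    have hmemCl : ∀ u w : W, w ∈ Cl u ↔ w ∉ A ∧ (w = u ∨ H.Adj w u) := by
      intro u w; simp [hCl]
    have hself : ∀ u ∉ A, u ∈ Cl u := fun u hu => (hmemCl u u).2 ⟨hu, Or.inl rfl⟩
    have hCl_clique : ∀ u ∉ A, H.IsClique ↑(Cl u) := by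
      intro u hu z hz z' hz' hne
      rw [Finset.mem_coe, hmemCl] at hz hz'
      rcases hz.2 with rfl | hzu
      · rcases hz'.2 with rfl | hz'u
        · exact absurd rfl hne
        · exact hz'u.symm
      · rcases hz'.2 with rfl | hz'u
        · exact hzu
        · exact h2 z u z' hz.1 hu hz'.1 hne hzu hz'u.symm
    have hsame : ∀ u w, u ∉ A → w ∉ A → H.Adj u w → Cl u = Cl w := by
      intro u w hu hw huw
      ext z
      rw [hmemCl, hmemCl]
      constructor
      · rintro ⟨hz, rfl | hzu⟩
        · exact ⟨hz, Or.inr huw⟩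
        · rcases eq_or_ne z w with rfl | hzw
          · exact ⟨hz, Or.inl rfl⟩
          · exact ⟨hz, Or.inr (h2 z u w hz hu hw hzw hzu huw)⟩
      · rintro ⟨hz, rfl | hzw⟩
        · exact ⟨hz, Or.inr huw.symm⟩
        · rcases eq_or_ne z u with rfl | hzu
          · exact ⟨hz, Or.inl rfl⟩
          · exact ⟨hz, Or.inr (h2 z w u hz hw hu hzu hzw huw.symm)⟩
    -- per-class colorings
    have hclass : ∀ u ∉ A, ∃ g : W → Fin m,
        Set.InjOn g ↑(Cl u) ∧ ∀ w ∈ Cl u, ∀ a ∈ A, H.Adj w a → g w ≠ colA a := by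
      intro u hu
      set C := Cl u with hC
      have hCcard : C.card ≤ m := (hCl_clique u hu).card_le_cliqueNum
      set forb : W → Finset (Fin m) := fun w => (A.filter fun a => H.Adj w a).image colA
        with hforb
      have hforb_card : ∀ w ∈ C, (forb w).card ≤ 1 := by
        intro w hw
        apply le_trans Finset.card_image_le
        rw [Finset.card_le_one]
        intro a ha b hb
        rw [Finset.mem_filter] at ha hb
        exact h1 w ((hmemCl u w).1 hw).1 a ha.1 b hb.1 ha.2 hb.2
      set t : ↥C → Finset (Fin m) := fun w => Finset.univ \ forb ↑w with ht
      have hall : ∀ S : Finset ↥C, S.card ≤ (S.biUnion t).card := by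
        intro S
        rcases S.eq_empty_or_nonempty with rfl | ⟨w0, hw0⟩
        · simp
        have hsub : t w0 ⊆ S.biUnion t := Finset.subset_biUnion_of_mem t hw0
        have htw0 : m - 1 ≤ (t w0).card := by
          have hceq : (t w0).card = m - (forb ↑w0).card := by
            simp only [ht]
            rw [Finset.card_sdiff_of_subset (Finset.subset_univ _), Finset.card_univ, Fintype.card_fin]
          have hf1 : (forb (↑w0 : W)).card ≤ 1 := hforb_card ↑w0 w0.2
          omega
        by_contra hlt
        push_neg at hlt
        -- S.card > biUnion card ≥ m-1, and S.card ≤ m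
        have hSle : S.card ≤ m := le_trans (by
          have h := Finset.card_le_univ S
          rwa [Fintype.card_coe] at h) hCcard
        have hge : m - 1 ≤ (S.biUnion t).card := le_trans htw0 (Finset.card_le_card hsub)
        have hSm : S.card = m := by omega
        -- so biUnion has card < m; find a missing color
        have hmiss : ∃ x : Fin m, x ∉ S.biUnion t := by
          by_contra hx
          push_neg at hx
          have : (Finset.univ : Finset (Fin m)) ⊆ S.biUnion t := fun x _ => hx x
          have := Finset.card_le_card this
          simp at this
          omega
        obtain ⟨x, hx⟩ := hmiss
        have hforbx : ∀ w ∈ S, x ∈ forb ↑w := by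
          intro w hw
          by_contra hxf
          exact hx (Finset.mem_biUnion.2 ⟨w, hw, by simp only [ht, Finset.mem_sdiff]; exact ⟨Finset.mem_univ x, hxf⟩⟩)
        -- all forbidden colors equal x come from the same vertex a0
        obtain ⟨a0, ha0A, ha0adj, ha0col⟩ : ∃ a0 ∈ A, H.Adj (↑w0) a0 ∧ colA a0 = x := by
          have := hforbx w0 hw0
          simp only [hforb, Finset.mem_image] at this
          obtain ⟨a, ha, hcol⟩ := this
          rw [Finset.mem_filter] at ha
          exact ⟨a, ha.1, ha.2, hcol⟩
        have hall_adj : ∀ w ∈ S, H.Adj (↑w) a0 := by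
          intro w hw
          have := hforbx w hw
          simp only [hforb, Finset.mem_image] at this
          obtain ⟨a, ha, hcol⟩ := this
          rw [Finset.mem_filter] at ha
          have : a = a0 := hcolA ha.1 ha0A (by rw [hcol, ha0col])
          exact this ▸ ha.2
        -- build a clique of size m+1
        set S' : Finset W := S.image Subtype.val with hS'
        have hS'card : S'.card = m := by
          rw [hS', Finset.card_image_of_injective _ Subtype.val_injective, hSm]
        have ha0S' : a0 ∉ S' := by
          rw [hS', Finset.mem_image]
          rintro ⟨w, hw, rfl⟩
          exact ((hmemCl u ↑w).1 w.2).1 ha0A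
        have hbig : H.IsClique ↑(insert a0 S') := by
          intro z hz z' hz' hne
          simp only [Finset.coe_insert, Set.mem_insert_iff, Finset.mem_coe] at hz hz'
          rcases hz with rfl | hz
          · rcases hz' with rfl | hz'
            · exact absurd rfl hne
            · rw [hS', Finset.mem_image] at hz'
              obtain ⟨w, hw, rfl⟩ := hz'
              exact (hall_adj w hw).symm
          · rcases hz' with rfl | hz'
            · rw [hS', Finset.mem_image] at hz
              obtain ⟨w, hw, rfl⟩ := hz
              exact hall_adj w hw
            · rw [hS', Finset.mem_image] at hz hz'
              obtain ⟨w, hw, rfl⟩ := hz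
              obtain ⟨w', hw', rfl⟩ := hz'
              exact hCl_clique u hu w.2 w'.2 hne
        have := hbig.card_le_cliqueNum
        rw [Finset.card_insert_of_notMem ha0S', hS'card] at this
        omega
      obtain ⟨f, hfinj, hfmem⟩ := (Finset.all_card_le_biUnion_card_iff_existsInjective' t).mp hall
      refine ⟨fun w => if h : w ∈ C then f ⟨w, h⟩ else ⟨0, hmpos⟩, ?_, ?_⟩
      · intro z hz z' hz' heq
        rw [Finset.mem_coe] at hz hz'
        simp only [dif_pos hz, dif_pos hz'] at heq
        simpa [Subtype.ext_iff] using hfinj heq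
      · intro w hw a ha hadj
        simp only [dif_pos hw]
        have hmem := hfmem ⟨w, hw⟩
        simp only [ht, Finset.mem_sdiff] at hmem
        intro hcontra
        apply hmem.2
        simp only [hforb, Finset.mem_image]
        exact ⟨a, Finset.mem_filter.2 ⟨ha, hadj⟩, hcontra.symm⟩
    -- choice over classes
    set good : Finset W → (W → Fin m) := fun C =>
      if h : ∃ g : W → Fin m, Set.InjOn g ↑C ∧
          ∀ w ∈ C, ∀ a ∈ A, H.Adj w a → g w ≠ colA a then h.choose else fun _ => ⟨0, hmpos⟩
      with hgood_def
    have hgood : ∀ u ∉ A, Set.InjOn (good (Cl u)) ↑(Cl u) ∧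
        ∀ w ∈ Cl u, ∀ a ∈ A, H.Adj w a → good (Cl u) w ≠ colA a := by
      intro u hu
      simp only [hgood_def]
      rw [dif_pos (hclass u hu)]
      exact (hclass u hu).choose_spec
    -- the coloring
    set c : W → Fin m := fun v => if v ∈ A then colA v else good (Cl v) v with hc
    have hvalid : ∀ {v w : W}, H.Adj v w → c v ≠ c w := by
      intro v w hadj
      by_cases hv : v ∈ A <;> by_cases hw : w ∈ A
      · simp only [hc, if_pos hv, if_pos hw]
        intro h
        exact hadj.ne (hcolA hv hw h)
      · simp only [hc, if_pos hv, if_neg hw]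
        intro h
        exact (hgood w hw).2 w (hself w hw) v hv hadj.symm h.symm
      · simp only [hc, if_neg hv, if_pos hw]
        intro h
        exact (hgood v hv).2 v (hself v hv) w hw hadj h
      · simp only [hc, if_neg hv, if_neg hw]
        have heq : Cl v = Cl w := hsame v w hv hw hadj
        rw [← heq]
        intro h
        exact hadj.ne ((hgood v hv).1 (hself v hv) (by rw [heq]; exact Finset.mem_coe.2 (hself w hw)) h)
    have hcol : H.Colorable m := ⟨Coloring.mk c hvalid⟩
    exact le_antisymm hcol.chromaticNumber_le hub

lemma inj4 {V : Type*} {a b c d : V} (hab : a ≠ b) (hac : a ≠ c) (had : a ≠ d)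
    (hbc : b ≠ c) (hbd : b ≠ d) (hcd : c ≠ d) : Function.Injective ![a, b, c, d] := by
  intro i j h
  fin_cases i <;> fin_cases j <;> simp_all

lemma inj5 {V : Type*} {a b c d e : V} (hab : a ≠ b) (hac : a ≠ c) (had : a ≠ d)
    (hae : a ≠ e) (hbc : b ≠ c) (hbd : b ≠ d) (hbe : b ≠ e) (hcd : c ≠ d)
    (hce : c ≠ e) (hde : d ≠ e) : Function.Injective ![a, b, c, d, e] := by
  intro i j h
  fin_cases i <;> fin_cases j <;> simp_all

lemma diamond_copy {V : Type*} (G : SimpleGraph V) {c v a b : V}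
    (hcv : ¬ G.Adj c v) (hca : G.Adj c a) (hcb : G.Adj c b) (hva : G.Adj v a)
    (hvb : G.Adj v b) (hab : G.Adj a b) :
    ∀ i j : Fin 4, G.Adj (![c, v, a, b] i) (![c, v, a, b] j) ↔ diamondG.Adj i j := by
  have h1 : ¬ G.Adj v c := fun h => hcv h.symm
  have s1 := hca.symm; have s2 := hcb.symm; have s3 := hva.symm
  have s4 := hvb.symm; have s5 := hab.symm
  have i1 : ¬ G.Adj c c := G.irrefl; have i2 : ¬ G.Adj v v := G.irrefl
  have i3 : ¬ G.Adj a a := G.irrefl; have i4 : ¬ G.Adj b b := G.irrefl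
  intro i j
  fin_cases i <;> fin_cases j <;>
    first
      | (exact iff_of_true (by assumption) (by simp [diamondG, SimpleGraph.fromRel_adj]))
      | (exact iff_of_false (by assumption) (by simp [diamondG, SimpleGraph.fromRel_adj]))

lemma p3up2_copy {V : Type*} (G : SimpleGraph V) {u w z x y : V}
    (huw : G.Adj u w) (hwz : G.Adj w z) (huz : ¬ G.Adj u z) (hxy : G.Adj x y)
    (hux : ¬ G.Adj u x) (huy : ¬ G.Adj u y) (hwx : ¬ G.Adj w x) (hwy : ¬ G.Adj w y)
    (hzx : ¬ G.Adj z x) (hzy : ¬ G.Adj z y) :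
    ∀ i j : Fin 5, G.Adj (![u, w, z, x, y] i) (![u, w, z, x, y] j) ↔ P3UP2.Adj i j := by
  have s1 := huw.symm; have s2 := hwz.symm; have s3 := hxy.symm
  have n1 : ¬ G.Adj z u := fun h => huz h.symm
  have n2 : ¬ G.Adj x u := fun h => hux h.symm
  have n3 : ¬ G.Adj y u := fun h => huy h.symm
  have n4 : ¬ G.Adj x w := fun h => hwx h.symm
  have n5 : ¬ G.Adj y w := fun h => hwy h.symm
  have n6 : ¬ G.Adj x z := fun h => hzx h.symm
  have n7 : ¬ G.Adj y z := fun h => hzy h.symm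
  have i1 : ¬ G.Adj u u := G.irrefl; have i2 : ¬ G.Adj w w := G.irrefl
  have i3 : ¬ G.Adj z z := G.irrefl; have i4 : ¬ G.Adj x x := G.irrefl
  have i5 : ¬ G.Adj y y := G.irrefl
  intro i j
  fin_cases i <;> fin_cases j <;>
    first
      | (exact iff_of_true (by assumption) (by simp [P3UP2, SimpleGraph.fromRel_adj]))
      | (exact iff_of_false (by assumption) (by simp [P3UP2, SimpleGraph.fromRel_adj]))

theorem stmt15 {V : Type*} [Fintype V] (G : SimpleGraph V) (h1 : _root_.Free G P3UP2)
    (h2 : _root_.Free G diamondG) (hω : 5 ≤ G.cliqueNum) :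
    IsPerfect G ∧ G.chromaticNumber = (G.cliqueNum : ℕ∞) := by
  classical
  obtain ⟨K, hK⟩ := G.exists_isNClique_cliqueNum
  -- every vertex outside K has at most one neighbor in K
  have h_one : ∀ v ∉ K, ∀ a ∈ K, ∀ b ∈ K, G.Adj v a → G.Adj v b → a = b := by
    intro v hv a ha b hb hva hvb
    by_contra hab
    by_cases hall : ∀ c ∈ K, G.Adj v c
    · have hclique : G.IsClique ↑(insert v K) := by
        intro x hx y hy hne
        simp only [Finset.coe_insert, Set.mem_insert_iff, Finset.mem_coe] at hx hy
        rcases hx with rfl | hx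
        · rcases hy with rfl | hy
          · exact absurd rfl hne
          · exact hall y hy
        · rcases hy with rfl | hy
          · exact (hall x hx).symm
          · exact hK.1 hx hy hne
      have hcard := hclique.card_le_cliqueNum
      rw [Finset.card_insert_of_notMem hv, hK.2] at hcard
      omega
    · push_neg at hall
      obtain ⟨c, hc, hvc⟩ := hall
      -- {c, v, a, b} induces a diamond
      apply h2
      have hcv : c ≠ v := fun h => hv (h ▸ hc)
      have hca : c ≠ a := fun h => hvc (h ▸ hva)
      have hcb : c ≠ b := fun h => hvc (h ▸ hvb)
      have hva' : v ≠ a := hva.ne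
      have hvb' : v ≠ b := hvb.ne
      have hab' : G.Adj a b := hK.1 ha hb hab
      have hca' : G.Adj c a := hK.1 hc ha hca
      have hcb' : G.Adj c b := hK.1 hc hb hcb
      have hcv' : ¬ G.Adj c v := fun h => hvc (G.adj_symm h)
      exact ⟨⟨![c, v, a, b], inj4 hcv hca hcb hva' hvb' hab⟩,
        diamond_copy G hcv' hca' hcb' hva hvb hab'⟩
  -- adjacency outside K is transitive
  have h_trans : ∀ u w z : V, u ∉ K → w ∉ K → z ∉ K → u ≠ z →
      G.Adj u w → G.Adj w z → G.Adj u z := by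
    intro u w z hu hw hz huz huw hwz
    by_contra huz'
    -- find two clique vertices non-adjacent to u, w, z
    have hsub : K.filter (fun a => G.Adj u a ∨ G.Adj w a ∨ G.Adj z a) ⊆
        (K.filter (fun a => G.Adj u a)) ∪ (K.filter (fun a => G.Adj w a)) ∪
          (K.filter (fun a => G.Adj z a)) := by
      intro a ha
      rw [Finset.mem_filter] at ha
      simp only [Finset.mem_union, Finset.mem_filter]
      tauto
    have hc1 : ∀ x, x ∉ K → (K.filter (fun a => G.Adj x a)).card ≤ 1 := by
      intro x hx
      rw [Finset.card_le_one]
      intro a ha b hb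
      rw [Finset.mem_filter] at ha hb
      exact h_one x hx a ha.1 b hb.1 ha.2 hb.2
    have hcard3 : (K.filter (fun a => G.Adj u a ∨ G.Adj w a ∨ G.Adj z a)).card ≤ 3 := by
      calc _ ≤ _ := Finset.card_le_card hsub
        _ ≤ _ := le_trans (Finset.card_union_le _ _)
            (add_le_add (Finset.card_union_le _ _) le_rfl)
        _ ≤ 3 := by
            have := hc1 u hu; have := hc1 w hw; have := hc1 z hz; omega
    have hcard2 : 2 ≤ (K.filter (fun a => ¬(G.Adj u a ∨ G.Adj w a ∨ G.Adj z a))).card := by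
      have := Finset.card_filter_add_card_filter_not
        (s := K) (p := fun a => G.Adj u a ∨ G.Adj w a ∨ G.Adj z a)
      rw [hK.2] at this
      omega
    obtain ⟨x, hx, y, hy, hxy⟩ := Finset.one_lt_card.mp (by omega :
      1 < (K.filter (fun a => ¬(G.Adj u a ∨ G.Adj w a ∨ G.Adj z a))).card)
    rw [Finset.mem_filter] at hx hy
    push_neg at hx hy
    have hxK := hx.1; have hxu := hx.2.1; have hxw := hx.2.2.1; have hxz := hx.2.2.2
    have hyK := hy.1; have hyu := hy.2.1; have hyw := hy.2.2.1; have hyz := hy.2.2.2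
    apply h1
    have huw' : u ≠ w := huw.ne
    have hwz' : w ≠ z := hwz.ne
    have hux : u ≠ x := fun h => hu (h ▸ hxK)
    have huy : u ≠ y := fun h => hu (h ▸ hyK)
    have hwx : w ≠ x := fun h => hw (h ▸ hxK)
    have hwy : w ≠ y := fun h => hw (h ▸ hyK)
    have hzx : z ≠ x := fun h => hz (h ▸ hxK)
    have hzy : z ≠ y := fun h => hz (h ▸ hyK)
    have hxy' : G.Adj x y := hK.1 hxK hyK hxy
    exact ⟨⟨![u, w, z, x, y], inj5 huw' huz hux huy hwz' hwx hwy hzx hzy hxy⟩,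
      p3up2_copy G huw hwz huz' hxy' hxu hyu hxw hyw hxz hyz⟩
  constructor
  · intro s
    haveI : Fintype ↥s := Fintype.ofFinite ↥s
    set A : Finset ↥s := Finset.univ.filter (fun v => (v : V) ∈ K) with hA
    have hmemA : ∀ v : ↥s, v ∈ A ↔ (v : V) ∈ K := by intro v; simp [hA]
    apply auxColor (G.induce s) A
    · intro x hx y hy hne
      rw [Finset.mem_coe, hmemA] at hx hy
      exact hK.1 hx hy (fun h => hne (Subtype.ext h))
    · intro v hv a ha b hb hva hvb
      rw [hmemA] at ha hb
      rw [hmemA] at hv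
      exact Subtype.ext (h_one ↑v hv ↑a ha ↑b hb hva hvb)
    · intro u w z hu hw hz huz huw hwz
      rw [hmemA] at hu hw hz
      exact h_trans ↑u ↑w ↑z hu hw hz (fun h => huz (Subtype.ext h)) huw hwz
  · exact auxColor G K hK.1 h_one h_trans
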